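/- Let L > 0, let k, Λ, m₁, m₂, m₃, n₁, n₂, n₃ be real numbers, and let R be an invertible 3×3 complex matrix. Define N(x,t) = k·x − Λ·t, P(x,t) = diag(1, exp(−i·N(x,t)), 1), E(x,t) = diag(exp(i·(m₁·x + n₁·t)), exp(i·(m₂·x + n₂·t)), exp(i·(m₃·x + n₃·t))), 𝖩 = diag((1/3)·i, −(2/3)·i, (1/3)·i), and F̂(x,t) := (P(x,t)·R·E(x,t))†·exp(N(x,t)·𝖩), where † denotes conjugate transpose. Then for ω ∈ ℂ with |ω| = 1, the quasi-periodicity F̂(x + L, t) = ω·F̂(x, t) holds for all (x, t) ∈ ℝ × ℝ if and only if exp(i·m_j·L) = conj(ω)·exp(i·k·L/3) for j = 1, 2, 3. -/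

import Mathlib

open Complex Matrix

noncomputable section

/-- The diagonal matrix `𝖩 = diag(i/3, −2i/3, i/3)`. -/
def matJ : Matrix (Fin 3) (Fin 3) ℂ :=
  Matrix.diagonal ![(1/3) * Complex.I, -(2/3) * Complex.I, (1/3) * Complex.I]

private lemma expJ (z : ℂ) :
    NormedSpace.exp (z • matJ) =
      Matrix.diagonal ![Complex.exp (z * ((1/3) * Complex.I)),
        Complex.exp (z * (-(2/3) * Complex.I)), Complex.exp (z * ((1/3) * Complex.I))] := by
  rw [matJ, ← Matrix.diagonal_smul, Matrix.exp_diagonal]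
  refine congrArg Matrix.diagonal ?_
  funext i
  rw [Pi.exp_def]
  simp only [Pi.smul_apply, smul_eq_mul, ← Complex.exp_eq_exp_ℂ]
  fin_cases i <;> (simp; try (congr 1; ring))

private lemma frame_shift (Rh : Matrix (Fin 3) (Fin 3) ℂ)
    (a a' b₁ b₁' b₂ b₂' c : Fin 3 → ℂ) (e : ℂ)
    (ha : ∀ i, a' i = c i * a i)
    (hb : ∀ i, b₁' i * b₂' i = e * (b₁ i * b₂ i)) :
    Matrix.diagonal a' * (Rh * Matrix.diagonal b₁') * Matrix.diagonal b₂' =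
      e • (Matrix.diagonal c *
        (Matrix.diagonal a * (Rh * Matrix.diagonal b₁) * Matrix.diagonal b₂)) := by
  have h1 : Matrix.diagonal a' = Matrix.diagonal c * Matrix.diagonal a := by
    rw [Matrix.diagonal_mul_diagonal]
    exact congrArg _ (funext ha)
  have h2 : Matrix.diagonal b₁' * Matrix.diagonal b₂' =
      e • (Matrix.diagonal b₁ * Matrix.diagonal b₂) := by
    rw [Matrix.diagonal_mul_diagonal, Matrix.diagonal_mul_diagonal,
      ← Matrix.diagonal_smul]
    exact congrArg _ (funext hb)
  calc Matrix.diagonal a' * (Rh * Matrix.diagonal b₁') * Matrix.diagonal b₂'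
      = Matrix.diagonal a' * Rh * (Matrix.diagonal b₁' * Matrix.diagonal b₂') := by
        noncomm_ring
    _ = (Matrix.diagonal c * Matrix.diagonal a) * Rh *
          (e • (Matrix.diagonal b₁ * Matrix.diagonal b₂)) := by rw [h1, h2]
    _ = e • (Matrix.diagonal c *
          (Matrix.diagonal a * (Rh * Matrix.diagonal b₁) * Matrix.diagonal b₂)) := by
        rw [Matrix.mul_smul]
        congr 1
        noncomm_ring

/-- Quasi-periodicity of the local frame `F̂ = (P·R·E)†·exp(N·𝖩)` with factor `ω`
is equivalent to the closure condition `exp(i·mⱼ·L) = conj(ω)·exp(i·k·L/3)`. -/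
theorem quasiPeriodicity_iff_closure (L : ℝ) (hL : 0 < L)
    (k Λ : ℝ) (ms ns : Fin 3 → ℝ)
    (R : Matrix (Fin 3) (Fin 3) ℂ) (hR : IsUnit R)
    (N : ℝ × ℝ → ℝ) (hN : N = fun p => k * p.1 - Λ * p.2)
    (P : ℝ × ℝ → Matrix (Fin 3) (Fin 3) ℂ)
    (hP : P = fun p => Matrix.diagonal ![1, Complex.exp (-Complex.I * (N p : ℂ)), 1])
    (E : ℝ × ℝ → Matrix (Fin 3) (Fin 3) ℂ)
    (hE : E = fun p => Matrix.diagonal fun j =>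
      Complex.exp (Complex.I * ((ms j : ℂ) * p.1 + (ns j : ℂ) * p.2)))
    (Fhat : ℝ × ℝ → Matrix (Fin 3) (Fin 3) ℂ)
    (hFhat : Fhat = fun p => (P p * R * E p)ᴴ * NormedSpace.exp (((N p : ℂ)) • matJ))
    (ω : ℂ) (hω : ‖ω‖ = 1) :
    ((∀ p : ℝ × ℝ, Fhat (p.1 + L, p.2) = ω • Fhat p)
      ↔ (∀ j : Fin 3, Complex.exp (Complex.I * (ms j : ℂ) * (L : ℂ))
            = (starRingEnd ℂ) ω * Complex.exp (Complex.I * (k : ℂ) * (L : ℂ) / 3))) := by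
  set e : ℂ := Complex.exp (Complex.I * (k : ℂ) * (L : ℂ) / 3) with he
  set c : Fin 3 → ℂ := fun j => (starRingEnd ℂ) (Complex.exp (Complex.I * (ms j : ℂ) * (L : ℂ)))
    with hc
  set D : Matrix (Fin 3) (Fin 3) ℂ := Matrix.diagonal c with hD
  -- rewrite Fhat in split diagonal form
  have hform : ∀ p : ℝ × ℝ, Fhat p =
      Matrix.diagonal (fun j => star (Complex.exp (Complex.I * ((ms j : ℂ) * p.1 + (ns j : ℂ) * p.2)))) *
        (Rᴴ * Matrix.diagonal (star ∘ ![1, Complex.exp (-Complex.I * (N p : ℂ)), 1])) *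
        Matrix.diagonal ![Complex.exp ((N p : ℂ) * ((1/3) * Complex.I)),
          Complex.exp ((N p : ℂ) * (-(2/3) * Complex.I)),
          Complex.exp ((N p : ℂ) * ((1/3) * Complex.I))] := by
    intro p
    simp only [hFhat, hP, hE]
    rw [expJ]
    simp only [Matrix.conjTranspose_mul, Matrix.diagonal_conjTranspose]
    rfl
  -- the key shift identity
  have hstep : ∀ p : ℝ × ℝ, Fhat (p.1 + L, p.2) = e • (D * Fhat p) := by
    intro p
    rw [hform, hform p, hD]
    have hNL : (N (p.1 + L, p.2) : ℂ) = (N p : ℂ) + k * L := by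
      rw [hN]; push_cast; ring
    rw [hNL]
    apply frame_shift
    · intro i
      rw [hc]
      simp only [Complex.star_def, ← _root_.map_mul, ← Complex.exp_add]
      congr 2
      push_cast
      ring
    · intro i
      fin_cases i
      · show star (1 : ℂ) *
            Complex.exp (((N p : ℂ) + (k : ℂ) * (L : ℂ)) * (1/3 * Complex.I)) =
          e * (star (1 : ℂ) * Complex.exp ((N p : ℂ) * (1/3 * Complex.I)))
        rw [star_one, one_mul, one_mul, he, ← Complex.exp_add]
        congr 1
        ring
      · show star (Complex.exp (-Complex.I * ((N p : ℂ) + (k : ℂ) * (L : ℂ)))) *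
            Complex.exp (((N p : ℂ) + (k : ℂ) * (L : ℂ)) * (-(2/3) * Complex.I)) =
          e * (star (Complex.exp (-Complex.I * (N p : ℂ))) *
            Complex.exp ((N p : ℂ) * (-(2/3) * Complex.I)))
        simp only [Complex.star_def, ← Complex.exp_conj, map_neg, _root_.map_mul,
          map_add, Complex.conj_I, Complex.conj_ofReal]
        rw [he, ← Complex.exp_add, ← Complex.exp_add, ← Complex.exp_add]
        congr 1
        ring
      · show star (1 : ℂ) *
            Complex.exp (((N p : ℂ) + (k : ℂ) * (L : ℂ)) * (1/3 * Complex.I)) =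
          e * (star (1 : ℂ) * Complex.exp ((N p : ℂ) * (1/3 * Complex.I)))
        rw [star_one, one_mul, one_mul, he, ← Complex.exp_add]
        congr 1
        ring
  -- conj e * e = 1
  have hce : (starRingEnd ℂ) e * e = 1 := by
    rw [he, ← Complex.exp_conj, ← Complex.exp_add]
    have : (starRingEnd ℂ) (Complex.I * (k : ℂ) * (L : ℂ) / 3) =
        -(Complex.I * (k : ℂ) * (L : ℂ) / 3) := by
      rw [map_div₀, _root_.map_mul, _root_.map_mul, Complex.conj_I,
        Complex.conj_ofReal, Complex.conj_ofReal, map_ofNat]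
      ring
    rw [this, neg_add_cancel, Complex.exp_zero]
  constructor
  · intro h j
    -- Fhat (0,0) is a unit
    have hM : IsUnit (Fhat (0, 0)) := by
      rw [hform]
      refine (IsUnit.mul (IsUnit.mul ?_ (IsUnit.mul ?_ ?_)) ?_)
      · rw [Matrix.isUnit_iff_isUnit_det, Matrix.det_diagonal, Fin.prod_univ_three]
        simp [isUnit_iff_ne_zero, Complex.exp_ne_zero]
      · exact (Matrix.isUnit_conjTranspose R).mpr hR
      · rw [Matrix.isUnit_iff_isUnit_det, Matrix.det_diagonal, Fin.prod_univ_three]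
        simp [isUnit_iff_ne_zero, Complex.exp_ne_zero]
      · rw [Matrix.isUnit_iff_isUnit_det, Matrix.det_diagonal, Fin.prod_univ_three]
        simp [isUnit_iff_ne_zero, Complex.exp_ne_zero]
    obtain ⟨u, hu⟩ := hM
    have h0 := h (0, 0)
    rw [hstep (0, 0)] at h0
    rw [← hu] at h0
    have h1 : e • D = ω • (1 : Matrix (Fin 3) (Fin 3) ℂ) := by
      have h4 := congrArg
        (fun M : Matrix (Fin 3) (Fin 3) ℂ => M * (↑(u⁻¹) : Matrix (Fin 3) (Fin 3) ℂ)) h0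
      simp only [smul_mul_assoc, mul_assoc, Units.mul_inv, mul_one] at h4
      exact h4
    have h2 := congrFun (congrFun h1 j) j
    simp only [Matrix.smul_apply, hD, Matrix.diagonal_apply_eq, Matrix.one_apply_eq,
      smul_eq_mul, mul_one] at h2
    -- h2 : e * c j = ω
    have h3 := congrArg (starRingEnd ℂ) h2
    rw [_root_.map_mul, hc] at h3
    simp only [Complex.conj_conj] at h3
    -- h3 : conj e * exp(I m_j L) = conj ω
    calc Complex.exp (Complex.I * (ms j : ℂ) * (L : ℂ))
        = ((starRingEnd ℂ) e * e) * Complex.exp (Complex.I * (ms j : ℂ) * (L : ℂ)) := by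
          rw [hce, one_mul]
      _ = ((starRingEnd ℂ) e * Complex.exp (Complex.I * (ms j : ℂ) * (L : ℂ))) * e := by
          ring
      _ = (starRingEnd ℂ) ω * e := by rw [h3]
  · intro h p
    rw [hstep p]
    have hD1 : e • D = ω • (1 : Matrix (Fin 3) (Fin 3) ℂ) := by
      rw [hD, ← Matrix.diagonal_smul, Matrix.smul_one_eq_diagonal]
      refine congrArg Matrix.diagonal ?_
      funext i
      simp only [Pi.smul_apply, smul_eq_mul, mul_one, hc, h i, _root_.map_mul,
        Complex.conj_conj]
      calc e * (ω * (starRingEnd ℂ) e)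
          = ω * ((starRingEnd ℂ) e * e) := by ring
        _ = ω := by rw [hce, mul_one]
    calc e • (D * Fhat p) = (e • D) * Fhat p := by rw [Matrix.smul_mul]
      _ = (ω • (1 : Matrix (Fin 3) (Fin 3) ℂ)) * Fhat p := by rw [hD1]
      _ = ω • Fhat p := by rw [Matrix.smul_mul, one_mul]

end
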